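/- Let H ∈ ℝ^{m × T}, let h_0, h_1, …, h_N ∈ ℝ^m, let U_0 = {u ∈ ℝ^T | Hu ≤ h_0} and U_i = {u ∈ ℝ^T | Hu ≤ h_i} for i = 1, …, N, and let U = Σ_{i=1}^N U_i be the Minkowski sum of the sets U_i. If there exist vectors γ_i ∈ ℝ^T, matrices Γ_i ∈ ℝ^{T×T}, and matrices Λ_i ∈ ℝ^{m×m} for i = 1, …, N such that p̄ = Σ_{i=1}^N γ_i, P = Σ_{i=1}^N Γ_i, and for every i: Λ_i ≥ 0, Λ_i H = H Γ_i, and Λ_i h_0 ≤ h_i − H γ_i, then p̄ + P U_0 ⊆ U. -/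
import Mathlib

open Pointwise

/-- **Theorem 1 (AH-polytope in Sum of H-polytopes).**
If `p̄ = Σᵢ γᵢ`, `P = Σᵢ Γᵢ`, and for each `i` there is an entrywise nonnegative `Λᵢ`
with `Λᵢ H = H Γᵢ` and `Λᵢ h₀ ≤ hᵢ - H γᵢ`, then `p̄ + P 𝕌₀ ⊆ 𝕌 = Σᵢ 𝕌ᵢ`. -/
theorem ah_polytope_in_sum_of_h_polytopes
    {m T N : ℕ}
    (H : Matrix (Fin m) (Fin T) ℝ) (h₀ : Fin m → ℝ) (h : Fin N → Fin m → ℝ)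
    (U₀ : Set (Fin T → ℝ)) (hU₀ : U₀ = {u | H.mulVec u ≤ h₀})
    (Ui : Fin N → Set (Fin T → ℝ)) (hUi : ∀ i, Ui i = {u | H.mulVec u ≤ h i})
    (U : Set (Fin T → ℝ)) (hU : U = ∑ i, Ui i)
    (pbar : Fin T → ℝ) (P : Matrix (Fin T) (Fin T) ℝ)
    (γ : Fin N → Fin T → ℝ) (Γ : Fin N → Matrix (Fin T) (Fin T) ℝ)
    (Λ : Fin N → Matrix (Fin m) (Fin m) ℝ)
    (hpbar : pbar = ∑ i, γ i)
    (hP : P = ∑ i, Γ i)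
    (hΛpos : ∀ i, ∀ k l, 0 ≤ Λ i k l)
    (hΛH : ∀ i, Λ i * H = H * Γ i)
    (hΛh : ∀ i, (Λ i).mulVec h₀ ≤ h i - H.mulVec (γ i)) :
    (fun u => pbar + P.mulVec u) '' U₀ ⊆ U := by
  rintro x ⟨u, hu, rfl⟩
  rw [hU₀] at hu
  rw [hU, Set.mem_fintype_sum]
  refine ⟨fun i => γ i + (Γ i).mulVec u, fun i => ?_, ?_⟩
  · rw [hUi]
    intro k
    have key : (Λ i).mulVec (H.mulVec u) ≤ (Λ i).mulVec h₀ := by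
      intro j
      simp only [Matrix.mulVec, dotProduct]
      exact Finset.sum_le_sum fun l _ =>
        mul_le_mul_of_nonneg_left (hu l) (hΛpos i j l)
    have h2 : H.mulVec ((Γ i).mulVec u) = (Λ i).mulVec (H.mulVec u) := by
      rw [Matrix.mulVec_mulVec, Matrix.mulVec_mulVec, hΛH]
    have h3 := hΛh i k
    simp only [Set.mem_setOf_eq, Matrix.mulVec_add, Pi.add_apply, Pi.sub_apply] at *
    calc H.mulVec (γ i) k + H.mulVec ((Γ i).mulVec u) k
        = H.mulVec (γ i) k + (Λ i).mulVec (H.mulVec u) k := by rw [h2]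
      _ ≤ H.mulVec (γ i) k + (Λ i).mulVec h₀ k := by linarith [key k]
      _ ≤ h i k := by linarith
  · rw [hpbar, hP]
    ext k
    simp only [Pi.add_apply, Finset.sum_apply, Finset.sum_add_distrib,
      Matrix.mulVec, dotProduct, Matrix.sum_apply, Finset.sum_mul]
    rw [Finset.sum_comm]
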